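/- Let S be a unitary on H ⊕ L and Π the orthogonal projection onto L. For ξ ∈ H, the vector v = (Π − Π S Π)⁺ Π S ξ (pseudoinverse) lies in the orthogonal complement in L of the 1-eigenspace of Π S Π, and satisfies Π S(ξ ⊕ v) = Π v, i.e., S(ξ ⊕ v) = τ ⊕ v for τ = (I − Π) S (ξ ⊕ v) ∈ H. -/

import Mathlib

open LinearMap

/-- The orthogonal projection onto a (finite-dimensional) subspace `L`, as an
endomorphism of the ambient space. -/
noncomputable def projOnto {W : Type*} [NormedAddCommGroup W] [InnerProductSpace ℂ W]
    [FiniteDimensional ℂ W] (L : Submodule ℂ W) : W →ₗ[ℂ] W :=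
  L.subtype ∘ₗ (Submodule.orthogonalProjectionOnto L).toLinearMap

/-- The Moore–Penrose pseudoinverse of `A` applied to `b`: the unique vector `x`
orthogonal to `ker A` with `A x` equal to the orthogonal projection of `b` onto the
range of `A`. -/
noncomputable def pinvApply {W : Type*} [NormedAddCommGroup W] [InnerProductSpace ℂ W]
    [FiniteDimensional ℂ W] (A : W →ₗ[ℂ] W) (b : W) : W :=
  Classical.epsilon fun x =>
    x ∈ (LinearMap.ker A)ᗮ ∧ A x = (Submodule.orthogonalProjectionOnto (LinearMap.range A) b : W)

/-- Let `S` be a unitary on `W = H ⊕ L` (`L = Hᗮ`) and `Π` the orthogonal projection onto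
`L`. For `ξ ∈ H`, the vector `v = (Π − Π S Π)⁺ Π S ξ` lies in `L`, in the orthogonal
complement of the `1`-eigenspace of `Π S Π`, and satisfies `Π S (ξ + v) = v`, i.e.
`S (ξ + v) = τ + v` with `τ = (I − Π) S (ξ + v) ∈ H`. -/
theorem transduction_catalyst_pinv
    {W : Type*} [NormedAddCommGroup W] [InnerProductSpace ℂ W] [FiniteDimensional ℂ W]
    (H : Submodule ℂ W) (S : W ≃ₗᵢ[ℂ] W)
    (ξ : W) (hξ : ξ ∈ H)
    (v : W)
    (hvdef : v = pinvApply
        (projOnto Hᗮ - (projOnto Hᗮ ∘ₗ S.toLinearEquiv.toLinearMap ∘ₗ projOnto Hᗮ))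
        (projOnto Hᗮ (S ξ))) :
    v ∈ Hᗮ ∧
    (∀ w ∈ Hᗮ, ((Submodule.orthogonalProjectionOnto Hᗮ (S w)) : W) = w → (inner ℂ v w : ℂ) = 0) ∧
    ((Submodule.orthogonalProjectionOnto Hᗮ (S (ξ + v))) : W) = v ∧
    S (ξ + v) - v ∈ H := by
  classical
  set L := Hᗮ with hLdef
  set A : W →ₗ[ℂ] W :=
    projOnto L - (projOnto L ∘ₗ S.toLinearEquiv.toLinearMap ∘ₗ projOnto L) with hAdef
  have hP : ∀ x : W, projOnto L x = (Submodule.orthogonalProjectionOnto L x : W) := fun x => rfl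
  have hPL : ∀ x ∈ L, projOnto L x = x := fun x hx => by
    rw [hP]; exact Submodule.starProjection_eq_self_iff.mpr hx
  have hPH : ∀ x ∈ H, projOnto L x = 0 := fun x hx => by
    rw [hP, Submodule.orthogonalProjectionOnto_apply_of_mem_orthogonal
      ((Submodule.le_orthogonal_orthogonal H) hx)]
    simp
  have hAapp : ∀ x : W, A x = projOnto L x - projOnto L (S (projOnto L x)) := fun x => rfl
  -- H is contained in the kernel of A
  have hHker : H ≤ LinearMap.ker A := by
    intro x hx
    rw [LinearMap.mem_ker, hAapp, hPH x hx]
    simp [hPH 0 (Submodule.zero_mem H)]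
  -- existence of an epsilon witness
  have hex : ∃ x, x ∈ (LinearMap.ker A)ᗮ ∧
      A x = (Submodule.orthogonalProjectionOnto (LinearMap.range A) (projOnto L (S ξ)) : W) := by
    obtain ⟨x0, hx0⟩ :=
      (Submodule.orthogonalProjectionOnto (LinearMap.range A) (projOnto L (S ξ))).2
    refine ⟨(Submodule.orthogonalProjectionOnto (LinearMap.ker A)ᗮ x0 : W), Submodule.coe_mem _, ?_⟩
    have hker : x0 - (Submodule.orthogonalProjectionOnto (LinearMap.ker A)ᗮ x0 : W) ∈ LinearMap.ker A := by
      have h := Submodule.sub_starProjection_mem_orthogonal (K := (LinearMap.ker A)ᗮ) x0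
      rwa [Submodule.starProjection_apply, Submodule.orthogonal_orthogonal] at h
    have h0 : A x0 - A (Submodule.orthogonalProjectionOnto (LinearMap.ker A)ᗮ x0 : W) = 0 := by
      rw [← map_sub]; exact hker
    rw [← sub_eq_zero, ← hx0]
    linear_combination (norm := module) -h0
  have hv : v ∈ (LinearMap.ker A)ᗮ ∧
      A v = (Submodule.orthogonalProjectionOnto (LinearMap.range A) (projOnto L (S ξ)) : W) := by
    rw [hvdef]
    exact Classical.epsilon_spec hex
  have hvL : v ∈ L := (Submodule.orthogonal_le hHker) hv.1
  -- Π S ξ lies in the range of A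
  have hrange : projOnto L (S ξ) ∈ LinearMap.range A := by
    rw [← Submodule.orthogonal_orthogonal (LinearMap.range A), Submodule.mem_orthogonal]
    intro z hz
    have hzL : projOnto L z ∈ L := by rw [hP]; exact Submodule.coe_mem _
    -- S fixes projOnto L z
    have hfix : S.symm (projOnto L z) = projOnto L z := by
      have hinner : ∀ y ∈ L, (inner ℂ y (projOnto L z - S.symm (projOnto L z)) : ℂ) = 0 := by
        intro y hy
        have hAy : (inner ℂ (A y) z : ℂ) = 0 :=
          (Submodule.mem_orthogonal _ z).mp hz (A y) ⟨y, rfl⟩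
        rw [hAapp, hPL y hy, inner_sub_left] at hAy
        have hsa : (inner ℂ (projOnto L (S y)) z : ℂ) = inner ℂ (S y) (projOnto L z) := by
          rw [hP, hP, ← Submodule.starProjection_apply, ← Submodule.starProjection_apply,
            Submodule.inner_starProjection_left_eq_right]
        have hy2 : (inner ℂ y z : ℂ) = inner ℂ y (projOnto L z) := by
          have h := Submodule.inner_starProjection_left_eq_right L y z
          simp only [Submodule.starProjection_apply, ← hP] at h
          rw [hPL y hy] at h
          exact h
        rw [hsa, hy2, sub_eq_zero] at hAy
        have hSy : (inner ℂ (S y) (projOnto L z) : ℂ) = inner ℂ y (S.symm (projOnto L z)) := by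
          conv_lhs => rw [← S.apply_symm_apply (projOnto L z)]
          exact S.inner_map_map y _
        rw [inner_sub_right, hAy, hSy, sub_self]
      have hmem : projOnto L z - S.symm (projOnto L z) ∈ Lᗮ :=
        (Submodule.mem_orthogonal L _).mpr hinner
      have hproj : projOnto L (S.symm (projOnto L z)) = projOnto L z := by
        have h0 : projOnto L (projOnto L z - S.symm (projOnto L z)) = 0 := by
          rw [hP, Submodule.orthogonalProjectionOnto_apply_of_mem_orthogonal hmem]
          simp
        rw [map_sub, hPL _ hzL, sub_eq_zero] at h0
        exact h0.symm
      -- norm argument: S.symm (Π z) already lies in L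
      have hnorm : ‖S.symm (projOnto L z)‖ = ‖projOnto L z‖ := S.symm.norm_map _
      have hpyth := Submodule.norm_sq_eq_add_norm_sq_projection (S.symm (projOnto L z)) L
      have hnp : ‖Submodule.orthogonalProjectionOnto L (S.symm (projOnto L z))‖ = ‖projOnto L z‖ := by
        have h4 : ((Submodule.orthogonalProjectionOnto L (S.symm (projOnto L z))) : W) = projOnto L z :=
          hproj
        conv_rhs => rw [← h4]
        rfl
      have hzero : (Submodule.orthogonalProjectionOnto Lᗮ (S.symm (projOnto L z)) : W) = 0 := by
        have h2 : ‖Submodule.orthogonalProjectionOnto Lᗮ (S.symm (projOnto L z))‖ ^ 2 = 0 := by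
          rw [hnorm, hnp] at hpyth
          linarith
        have h3 : ‖Submodule.orthogonalProjectionOnto Lᗮ (S.symm (projOnto L z))‖ = 0 := by
          nlinarith [norm_nonneg (Submodule.orthogonalProjectionOnto Lᗮ (S.symm (projOnto L z)))]
        rw [norm_eq_zero] at h3
        rw [h3]; rfl
      have hdecomp := Submodule.starProjection_add_starProjection_orthogonal (K := L)
        (S.symm (projOnto L z))
      rw [Submodule.starProjection_apply, Submodule.starProjection_apply, hzero, add_zero] at hdecomp
      rw [← hdecomp]
      exact hproj
    have hSfix : S (projOnto L z) = projOnto L z := by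
      conv_lhs => rw [← hfix]
      exact S.apply_symm_apply _
    -- conclude the inner product vanishes
    have h1 : (inner ℂ z (projOnto L (S ξ)) : ℂ) = inner ℂ (projOnto L z) (S ξ) := by
      rw [hP, hP, ← Submodule.starProjection_apply, ← Submodule.starProjection_apply,
        ← Submodule.inner_starProjection_left_eq_right]
    rw [h1]
    have h2 : (inner ℂ (projOnto L z) (S ξ) : ℂ) = inner ℂ (S (projOnto L z)) (S ξ) := by
      rw [hSfix]
    rw [h2, S.inner_map_map]
    exact inner_eq_zero_symm.mp ((Submodule.mem_orthogonal H (projOnto L z)).mp hzL ξ hξ)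
  -- the defining equation for v
  have hAv : A v = projOnto L (S ξ) := by
    rw [hv.2]; exact Submodule.starProjection_eq_self_iff.mpr hrange
  have hkey : projOnto L (S (ξ + v)) = v := by
    rw [hAapp, hPL v hvL] at hAv
    have := hAv
    rw [map_add, map_add]
    linear_combination (norm := module) -this
  refine ⟨hvL, ?_, ?_, ?_⟩
  · intro w hw hfixw
    have hwker : w ∈ LinearMap.ker A := by
      rw [LinearMap.mem_ker, hAapp, hPL w hw]
      rw [hP, hfixw]
      exact sub_self w
    exact inner_eq_zero_symm.mp ((Submodule.mem_orthogonal _ v).mp hv.1 w hwker)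
  · rw [← hP]; exact hkey
  · have h := Submodule.sub_starProjection_mem_orthogonal (K := L) (S (ξ + v))
    rw [Submodule.starProjection_apply, ← hP, hkey] at h
    rwa [hLdef, Submodule.orthogonal_orthogonal] at h
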